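/- arXiv:math/0106136 — 2 statements merged into one kernel-verified Lean document; each statement's English description precedes it below -/
import Mathlib

section
/- Let 𝔛 be a collection of subsets of [n] and let ℑ(𝔛) be the two-sided ideal of the Grassmann algebra generated by {∂(e_Y) : Y ∈ 𝔛}. For any subset X ⊆ [n] with |X| ≥ 2: ∂(e_X) ∈ ℑ(𝔛) if and only if e_X ∈ ℑ(𝔛). -/
open ExteriorAlgebra

/-- The Grassmann algebra over `K` on generators `e 0, ..., e (n-1)`. -/
abbrev Grass (K : Type) [Field K] (n : ℕ) := ExteriorAlgebra K (Fin n → K)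

/-- The generator `e i`. -/
noncomputable def gen (K : Type) [Field K] (n : ℕ) (i : Fin n) : Grass K n :=
  ExteriorAlgebra.ι K (Pi.single i 1)

/-- The monomial associated to a list of indices. -/
noncomputable def monList (K : Type) [Field K] (n : ℕ) (l : List (Fin n)) : Grass K n :=
  (l.map (gen K n)).prod

/-- The monomial `e_X` of a subset `X ⊆ [n]`, factors in increasing order. -/
noncomputable def mon (K : Type) [Field K] (n : ℕ) (X : Finset (Fin n)) : Grass K n :=
  monList K n (X.sort (· ≤ ·))

/-- The degree `-1` antiderivation `∂` on the Grassmann algebra with `∂ (e i) = 1`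
(left contraction with the covector sending each generator to `1`). -/
noncomputable def bd (K : Type) [Field K] (n : ℕ) : Grass K n →ₗ[K] Grass K n :=
  CliffordAlgebra.contractLeft (∑ i : Fin n, LinearMap.proj i)

/-- The two-sided ideal `ℑ(𝔛)` generated by the differentials `∂ e_Y`, `Y ∈ 𝔛`. -/
noncomputable def OSIdeal (K : Type) [Field K] (n : ℕ) (X : Set (Finset (Fin n))) :
    TwoSidedIdeal (Grass K n) :=
  TwoSidedIdeal.span ((fun Y => bd K n (mon K n Y)) '' X)

section Aux

variable {R : Type*} {M : Type*} [CommRing R] [AddCommGroup M] [Module R M]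
  {Q : QuadraticForm R M} (d : Module.Dual R M)

open CliffordAlgebra in
/-- Leibniz rule for left contraction. -/
theorem contractLeft_mul' (x y : CliffordAlgebra Q) :
    contractLeft d (x * y) =
      contractLeft d x * y + involute x * contractLeft d y := by
  induction x using CliffordAlgebra.induction generalizing y with
  | algebraMap r =>
      simp [Algebra.smul_def, contractLeft_algebraMap, contractLeft_algebraMap_mul]
  | ι m =>
      rw [contractLeft_ι_mul, contractLeft_ι, involute_ι, Algebra.smul_def]
      noncomm_ring
  | mul a b ha hb =>
      rw [mul_assoc, ha, hb, ha b, map_mul]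
      noncomm_ring
  | add a b ha hb =>
      rw [add_mul, map_add, ha, hb, map_add, map_add]
      noncomm_ring

open CliffordAlgebra in
theorem involute_contractLeft (x : CliffordAlgebra Q) :
    involute (contractLeft d x) = - (contractLeft d (involute x)) := by
  induction x using CliffordAlgebra.induction with
  | algebraMap r => simp [contractLeft_algebraMap]
  | ι m => simp [contractLeft_ι, Algebra.smul_def]
  | mul a b ha hb =>
      rw [contractLeft_mul', map_add, map_mul, map_mul, ha, hb, involute_involute,
        map_mul, contractLeft_mul', involute_involute]
      noncomm_ring
  | add a b ha hb =>
      rw [map_add, map_add, ha, hb, map_add, map_add]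
      abel

end Aux

variable {K : Type} [Field K] {n : ℕ}

theorem dsum_single (a : Fin n) :
    (∑ i : Fin n, LinearMap.proj i : Module.Dual K (Fin n → K)) (Pi.single a 1) = 1 := by
  simp [LinearMap.proj, Finset.sum_apply, Pi.single_apply]

theorem bd_gen_mul (a : Fin n) (y : Grass K n) :
    bd K n (gen K n a * y) = y - gen K n a * bd K n y := by
  rw [bd, gen, CliffordAlgebra.contractLeft_ι_mul, dsum_single, one_smul]

theorem gen_sq (a : Fin n) : gen K n a * gen K n a = 0 :=
  ExteriorAlgebra.ι_sq_zero _

theorem involute_monList (l : List (Fin n)) :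
    CliffordAlgebra.involute (monList K n l) = ((-1 : K) ^ l.length) • monList K n l := by
  induction l with
  | nil => simp [monList]
  | cons a l ih =>
      have h1 : monList K n (a :: l) = gen K n a * monList K n l := by
        simp [monList]
      rw [h1, map_mul, ih, gen, CliffordAlgebra.involute_ι, List.length_cons, pow_succ,
        mul_neg_one, neg_smul, mul_smul_comm, neg_mul]
      rw [smul_neg]

theorem involute_bd (x : Grass K n) :
    CliffordAlgebra.involute (bd K n x) = - bd K n (CliffordAlgebra.involute x) :=
  involute_contractLeft _ x

/-- `e_X = e_a * ∂ e_X` where `a` is the head of the sorted list of `X`. -/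
theorem mon_eq_gen_mul_bd (X : Finset (Fin n)) (hX : X.Nonempty) :
    ∃ a : Fin n, mon K n X = gen K n a * bd K n (mon K n X) := by
  have hpos : 0 < (X.sort (· ≤ ·)).length := by
    rw [Finset.length_sort]; exact Finset.card_pos.mpr hX
  obtain ⟨a, l, hal⟩ : ∃ a l, X.sort (· ≤ ·) = a :: l := by
    cases h : X.sort (· ≤ ·) with
    | nil => rw [h] at hpos; simp at hpos
    | cons a l => exact ⟨a, l, rfl⟩
  refine ⟨a, ?_⟩
  have hm : mon K n X = gen K n a * monList K n l := by
    rw [mon, hal]; simp [monList]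
  rw [hm, bd_gen_mul, mul_sub, ← mul_assoc, gen_sq, zero_mul, sub_zero]

theorem bd_bd (x : Grass K n) : bd K n (bd K n x) = 0 :=
  CliffordAlgebra.contractLeft_contractLeft _ _

/-- The ideal is stable under `bd` and `involute`. -/
theorem bd_mem_OSIdeal {Xs : Set (Finset (Fin n))} {x : Grass K n}
    (hx : x ∈ OSIdeal K n Xs) :
    bd K n x ∈ OSIdeal K n Xs ∧ CliffordAlgebra.involute x ∈ OSIdeal K n Xs := by
  set I := OSIdeal K n Xs with hI
  let J : TwoSidedIdeal (Grass K n) := TwoSidedIdeal.mk'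
    {z | z ∈ I ∧ bd K n z ∈ I ∧ CliffordAlgebra.involute z ∈ I}
    ⟨I.zero_mem, by rw [map_zero]; exact I.zero_mem, by rw [map_zero]; exact I.zero_mem⟩
    (by
      rintro x y ⟨h1, h2, h3⟩ ⟨h4, h5, h6⟩
      exact ⟨I.add_mem h1 h4, by rw [map_add]; exact I.add_mem h2 h5,
        by rw [map_add]; exact I.add_mem h3 h6⟩)
    (by
      rintro x ⟨h1, h2, h3⟩
      exact ⟨I.neg_mem h1, by rw [map_neg]; exact I.neg_mem h2,
        by rw [map_neg]; exact I.neg_mem h3⟩)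
    (by
      rintro x y ⟨h1, h2, h3⟩
      refine ⟨I.mul_mem_left _ _ h1, ?_, ?_⟩
      · show bd K n (x * y) ∈ I
        rw [show bd K n (x * y) = bd K n x * y + CliffordAlgebra.involute x * bd K n y from
          contractLeft_mul' _ x y]
        exact I.add_mem (I.mul_mem_left _ _ h1) (I.mul_mem_left _ _ h2)
      · rw [map_mul]
        exact I.mul_mem_left _ _ h3)
    (by
      rintro x y ⟨h1, h2, h3⟩
      refine ⟨I.mul_mem_right _ _ h1, ?_, ?_⟩
      · show bd K n (x * y) ∈ I
        rw [show bd K n (x * y) = bd K n x * y + CliffordAlgebra.involute x * bd K n y from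
          contractLeft_mul' _ x y]
        exact I.add_mem (I.mul_mem_right _ _ h2) (I.mul_mem_right _ _ h3)
      · rw [map_mul]
        exact I.mul_mem_right _ _ h3)
  have hsub : ((fun Y => bd K n (mon K n Y)) '' Xs) ⊆ J := by
    rintro - ⟨Y, hY, rfl⟩
    rw [SetLike.mem_coe, TwoSidedIdeal.mem_mk']
    have hg : bd K n (mon K n Y) ∈ I := TwoSidedIdeal.subset_span ⟨Y, hY, rfl⟩
    refine ⟨hg, ?_, ?_⟩
    · rw [bd_bd]; exact I.zero_mem
    · rw [involute_bd, mon, involute_monList, map_smul]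
      refine I.neg_mem ?_
      rcases Nat.even_or_odd ((Y.sort (· ≤ ·)).length) with he | ho
      · rw [he.neg_one_pow, one_smul]
        exact hg
      · rw [Odd.neg_one_pow ho, neg_smul, one_smul]
        exact I.neg_mem hg
  have hxJ : x ∈ J := by
    rw [hI, OSIdeal] at hx
    exact TwoSidedIdeal.mem_span_iff.mp hx J hsub
  rw [TwoSidedIdeal.mem_mk'] at hxJ
  exact ⟨hxJ.2.1, hxJ.2.2⟩

/-- for `|X| ≥ 2`, `∂ e_X ∈ ℑ(𝔛)` iff `e_X ∈ ℑ(𝔛)`. -/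
theorem stmt2 (K : Type) [Field K] (n : ℕ) (Xs : Set (Finset (Fin n)))
    (X : Finset (Fin n)) (hX : 2 ≤ X.card) :
    bd K n (mon K n X) ∈ OSIdeal K n Xs ↔ mon K n X ∈ OSIdeal K n Xs := by
  constructor
  · intro h
    obtain ⟨a, ha⟩ := mon_eq_gen_mul_bd (K := K) X (Finset.card_pos.mp (by omega))
    rw [ha]
    exact (OSIdeal K n Xs).mul_mem_left _ _ h
  · intro h
    exact (bd_mem_OSIdeal h).1
end

section
/- Let M be a binary matroid and C a circuit with k ≥ 4 elements. The following are equivalent: (1) C has a chord; (2) ∂(e_C) ∈ ℑ(𝔠_{k−1}); (3) e_C ∈ ℑ(𝔠_{k−1}). -/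
open ExteriorAlgebra

/-- A circuit of a matroid: a minimal dependent (finite) set. -/
def IsCircuit {α : Type} [DecidableEq α] (M : Matroid α) (C : Finset α) : Prop :=
  M.Dep (C : Set α) ∧ ∀ D : Finset α, D ⊂ C → ¬ M.Dep (D : Set α)

/-- `i` is a chord of the circuit `C`, witnessed by circuits `C₁, C₂` with
`C₁ ∩ C₂ = {i}` and `C = C₁ Δ C₂`. -/
def IsChord {α : Type} [DecidableEq α] (M : Matroid α) (C : Finset α) (i : α) : Prop :=
  ∃ C₁ C₂ : Finset α, IsCircuit M C₁ ∧ IsCircuit M C₂ ∧ C₁ ∩ C₂ = {i} ∧ C = symmDiff C₁ C₂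

def HasChord {α : Type} [DecidableEq α] (M : Matroid α) (C : Finset α) : Prop :=
  ∃ i, IsChord M C i

/-- `M` is `ℓ`-chordal: every circuit with at least `ℓ` elements has a chord. -/
def Chordal {α : Type} [DecidableEq α] (M : Matroid α) (l : ℕ) : Prop :=
  ∀ C : Finset α, IsCircuit M C → l ≤ C.card → HasChord M C

/-- `M` is simple: every circuit has at least 3 elements. -/
def SimpleM {α : Type} [DecidableEq α] (M : Matroid α) : Prop :=
  ∀ C : Finset α, IsCircuit M C → 3 ≤ C.card

/-- `M` is binary: the symmetric difference of two distinct circuits contains a circuit. -/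
def BinaryM {α : Type} [DecidableEq α] (M : Matroid α) : Prop :=
  ∀ C D : Finset α, IsCircuit M C → IsCircuit M D → C ≠ D →
    ∃ C', IsCircuit M C' ∧ C' ⊆ symmDiff C D

/-- The set `𝔠` of circuits of `M`. -/
def Circuits {α : Type} [DecidableEq α] (M : Matroid α) : Set (Finset α) :=
  {C | IsCircuit M C}

/-- The set `𝔠_k` of circuits of `M` with at most `k` elements. -/
def CircuitsLe {α : Type} [DecidableEq α] (M : Matroid α) (k : ℕ) : Set (Finset α) :=
  {C | IsCircuit M C ∧ C.card ≤ k}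

namespace Stmt10Aux

variable {K : Type} [Field K] {n : ℕ}

lemma monList_nil : monList K n [] = 1 := rfl

lemma monList_cons (a : Fin n) (l : List (Fin n)) :
    monList K n (a :: l) = gen K n a * monList K n l := by
  simp [monList]

lemma monList_append (l l' : List (Fin n)) :
    monList K n (l ++ l') = monList K n l * monList K n l' := by
  simp [monList]

lemma gen_mul_self (a : Fin n) : gen K n a * gen K n a = 0 :=
  ExteriorAlgebra.ι_sq_zero _

lemma gen_swap (a b : Fin n) : gen K n a * gen K n b = -(gen K n b * gen K n a) := by
  have := ExteriorAlgebra.ι_add_mul_swap (R := K) (Pi.single a 1 : Fin n → K) (Pi.single b 1 : Fin n → K)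
  unfold gen
  exact eq_neg_of_add_eq_zero_left this

lemma monList_perm {l l' : List (Fin n)} (h : l.Perm l') :
    ∃ c : K, (c = 1 ∨ c = -1) ∧ monList K n l = c • monList K n l' := by
  induction h with
  | nil => exact ⟨1, Or.inl rfl, by simp⟩
  | cons a _ ih =>
    obtain ⟨c, hc, he⟩ := ih
    exact ⟨c, hc, by rw [monList_cons, monList_cons, he, mul_smul_comm]⟩
  | swap a b l =>
    refine ⟨-1, Or.inr rfl, ?_⟩
    rw [monList_cons, monList_cons, monList_cons, monList_cons, ← mul_assoc, ← mul_assoc,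
      gen_swap b a]
    simp
  | trans _ _ ih1 ih2 =>
    obtain ⟨c, hc, he⟩ := ih1
    obtain ⟨c', hc', he'⟩ := ih2
    refine ⟨c * c', ?_, by rw [he, he', smul_smul]⟩
    rcases hc with h1 | h1 <;> rcases hc' with h2 | h2 <;> simp [h1, h2]

lemma monList_not_nodup {l : List (Fin n)} (h : ¬ l.Nodup) : monList K n l = 0 := by
  induction l with
  | nil => simp at h
  | cons a l ih =>
    rw [List.nodup_cons, not_and_or] at h
    rcases h with h | h
    · simp only [not_not] at h
      have hp : l.Perm (a :: l.erase a) := List.perm_cons_erase h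
      obtain ⟨c, _, he⟩ := monList_perm (K := K) hp
      rw [monList_cons, he, mul_smul_comm, monList_cons, ← mul_assoc, gen_mul_self]
      simp
    · rw [monList_cons, ih h, mul_zero]

lemma monList_nodup_eq {l : List (Fin n)} (h : l.Nodup) :
    ∃ c : K, (c = 1 ∨ c = -1) ∧ monList K n l = c • mon K n l.toFinset := by
  have hp : l.Perm (l.toFinset.sort (· ≤ ·)) :=
    List.perm_of_nodup_nodup_toFinset_eq h (Finset.sort_nodup _ _)
      (by rw [Finset.sort_toFinset])
  obtain ⟨c, hc, he⟩ := monList_perm (K := K) hp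
  exact ⟨c, hc, he⟩


section bd

lemma fsum_single (a : Fin n) :
    (∑ i : Fin n, LinearMap.proj i : (Fin n → K) →ₗ[K] K) (Pi.single a 1) = 1 := by
  simp [Pi.single_apply]

lemma bd_one : bd K n (1 : Grass K n) = 0 :=
  CliffordAlgebra.contractLeft_one _ _

lemma bd_gen_mul (a : Fin n) (x : Grass K n) :
    bd K n (gen K n a * x) = x - gen K n a * bd K n x := by
  unfold bd gen
  rw [CliffordAlgebra.contractLeft_ι_mul, fsum_single, one_smul]

lemma bd_monList (l : List (Fin n)) :
    bd K n (monList K n l) =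
      ∑ j ∈ Finset.range l.length, ((-1 : K) ^ j) • monList K n (l.eraseIdx j) := by
  induction l with
  | nil => simpa [monList_nil] using bd_one
  | cons a l ih =>
    rw [monList_cons, bd_gen_mul, ih, Finset.mul_sum, List.length_cons,
      Finset.sum_range_succ']
    simp only [List.eraseIdx_cons_succ, List.eraseIdx_cons_zero, pow_zero, one_smul,
      pow_succ, mul_smul_comm, monList_cons]
    rw [sub_eq_add_neg, add_comm, ← Finset.sum_neg_distrib]
    congr 1
    refine Finset.sum_congr rfl fun j _ => ?_
    rw [← neg_smul]
    ring_nf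

lemma bd_bd (x : Grass K n) : bd K n (bd K n x) = 0 :=
  CliffordAlgebra.contractLeft_contractLeft _ _

lemma involute_gen (a : Fin n) :
    CliffordAlgebra.involute (gen K n a) = -(gen K n a) :=
  CliffordAlgebra.involute_ι _

lemma involute_monList (l : List (Fin n)) :
    CliffordAlgebra.involute (monList K n l) = ((-1 : K) ^ l.length) • monList K n l := by
  induction l with
  | nil => simp [monList_nil]
  | cons a l ih =>
    rw [monList_cons, map_mul, involute_gen, ih, List.length_cons]
    rw [neg_mul, mul_smul_comm, pow_succ, mul_neg_one, neg_smul]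

lemma bd_mul (x y : Grass K n) :
    bd K n (x * y) = bd K n x * y + CliffordAlgebra.involute x * bd K n y := by
  induction x using ExteriorAlgebra.induction generalizing y with
  | algebraMap r =>
    unfold bd
    rw [CliffordAlgebra.involute.commutes, ← Algebra.smul_def, map_smul,
      CliffordAlgebra.contractLeft_algebraMap, zero_mul, zero_add, ← Algebra.smul_def]
  | ι m =>
    unfold bd
    rw [CliffordAlgebra.contractLeft_ι_mul, CliffordAlgebra.contractLeft_ι,
      CliffordAlgebra.involute_ι, ← Algebra.smul_def, neg_mul, sub_eq_add_neg]
  | mul a b iha ihb =>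
    rw [mul_assoc, iha, ihb, iha (y := b), map_mul]
    noncomm_ring
  | add a b iha ihb =>
    rw [add_mul, map_add, map_add, map_add, iha, ihb]
    noncomm_ring

end bd


section spans

lemma mon_def (Y : Finset (Fin n)) : monList K n (Y.sort (· ≤ ·)) = mon K n Y := rfl

lemma monList_mem_span (l : List (Fin n)) :
    monList K n l ∈ Submodule.span K (Set.range (monList K n)) :=
  Submodule.subset_span ⟨l, rfl⟩

lemma monList_mul_mem {y : Grass K n} (hy : y ∈ Submodule.span K (Set.range (monList K n)))
    (l : List (Fin n)) : monList K n l * y ∈ Submodule.span K (Set.range (monList K n)) := by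
  induction hy using Submodule.span_induction with
  | mem x hx => obtain ⟨l', rfl⟩ := hx; rw [← monList_append]; exact monList_mem_span _
  | zero => rw [mul_zero]; exact Submodule.zero_mem _
  | add x y _ _ ihx ihy => rw [mul_add]; exact Submodule.add_mem _ ihx ihy
  | smul c x _ ih => rw [mul_smul_comm]; exact Submodule.smul_mem _ _ ih

lemma mem_span_monList (x : Grass K n) : x ∈ Submodule.span K (Set.range (monList K n)) := by
  induction x using ExteriorAlgebra.induction with
  | algebraMap r =>
    have : algebraMap K (Grass K n) r = r • monList K n [] := by
      rw [monList_nil, Algebra.smul_def, mul_one]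
    rw [this]; exact Submodule.smul_mem _ _ (monList_mem_span [])
  | ι m =>
    have hm : (ExteriorAlgebra.ι K m : Grass K n) = ∑ i : Fin n, m i • monList K n [i] := by
      have h1 : m = ∑ i : Fin n, Pi.single i (m i) := by
        rw [Finset.univ_sum_single]
      rw [show (ExteriorAlgebra.ι K m : Grass K n) = ExteriorAlgebra.ι K
        (∑ i : Fin n, Pi.single i (m i)) from by rw [← h1], map_sum]
      refine Finset.sum_congr rfl fun i _ => ?_
      have : Pi.single i (m i) = m i • (Pi.single i 1 : Fin n → K) := by
        rw [← Pi.single_smul, smul_eq_mul, mul_one]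
      rw [this, map_smul]
      congr 1
      simp [monList, gen]
    rw [hm]
    exact Submodule.sum_mem _ fun i _ => Submodule.smul_mem _ _ (monList_mem_span [i])
  | mul a b iha ihb =>
    induction iha using Submodule.span_induction with
    | mem x hx => obtain ⟨l, rfl⟩ := hx; exact monList_mul_mem ihb l
    | zero => rw [zero_mul]; exact Submodule.zero_mem _
    | add x y _ _ ihx ihy => rw [add_mul]; exact Submodule.add_mem _ ihx ihy
    | smul c x _ ih => rw [smul_mul_assoc]; exact Submodule.smul_mem _ _ ih
  | add a b iha ihb => exact Submodule.add_mem _ iha ihb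

/-- Generators of the ideal as a `K`-submodule. -/
def WSet (K : Type) [Field K] (n : ℕ) (X : Set (Finset (Fin n))) : Set (Grass K n) :=
  {z | ∃ x y Y, Y ∈ X ∧ z = x * bd K n (mon K n Y) * y}

lemma WSpan_mul_left (X : Set (Finset (Fin n))) (z : Grass K n) {v : Grass K n}
    (hv : v ∈ Submodule.span K (WSet K n X)) :
    z * v ∈ Submodule.span K (WSet K n X) := by
  induction hv using Submodule.span_induction with
  | mem w hw =>
    obtain ⟨x, y, Y, hY, rfl⟩ := hw
    refine Submodule.subset_span ⟨z * x, y, Y, hY, ?_⟩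
    simp only [mul_assoc]
  | zero => rw [mul_zero]; exact Submodule.zero_mem _
  | add x y _ _ ihx ihy => rw [mul_add]; exact Submodule.add_mem _ ihx ihy
  | smul c x _ ih => rw [mul_smul_comm]; exact Submodule.smul_mem _ _ ih

lemma WSpan_mul_right (X : Set (Finset (Fin n))) (z : Grass K n) {v : Grass K n}
    (hv : v ∈ Submodule.span K (WSet K n X)) :
    v * z ∈ Submodule.span K (WSet K n X) := by
  induction hv using Submodule.span_induction with
  | mem w hw =>
    obtain ⟨x, y, Y, hY, rfl⟩ := hw
    refine Submodule.subset_span ⟨x, y * z, Y, hY, ?_⟩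
    simp only [mul_assoc]
  | zero => rw [zero_mul]; exact Submodule.zero_mem _
  | add x y _ _ ihx ihy => rw [add_mul]; exact Submodule.add_mem _ ihx ihy
  | smul c x _ ih => rw [smul_mul_assoc]; exact Submodule.smul_mem _ _ ih

lemma mem_OSIdeal_iff (X : Set (Finset (Fin n))) (v : Grass K n) :
    v ∈ OSIdeal K n X ↔ v ∈ Submodule.span K (WSet K n X) := by
  constructor
  · intro hv
    have := TwoSidedIdeal.mem_span_iff.1 hv
      (TwoSidedIdeal.mk' (Submodule.span K (WSet K n X) : Set (Grass K n))
        (Submodule.zero_mem _) (fun hx hy => Submodule.add_mem _ hx hy)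
        (fun hx => Submodule.neg_mem _ hx)
        (fun {x y} hy => WSpan_mul_left X x hy)
        (fun {x y} hx => WSpan_mul_right X y hx))
    rw [TwoSidedIdeal.mem_mk'] at this
    apply this
    rw [TwoSidedIdeal.coe_mk']
    rintro w ⟨Y, hY, rfl⟩
    exact Submodule.subset_span ⟨1, 1, Y, hY, by rw [one_mul, mul_one]⟩
  · intro hv
    induction hv using Submodule.span_induction with
    | mem w hw =>
      obtain ⟨x, y, Y, hY, rfl⟩ := hw
      exact TwoSidedIdeal.mul_mem_right _ _ _ (TwoSidedIdeal.mul_mem_left _ _ _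
        (TwoSidedIdeal.subset_span ⟨Y, hY, rfl⟩))
    | zero => exact zero_mem _
    | add x y _ _ ihx ihy => exact add_mem ihx ihy
    | smul c x _ ih => rw [Algebra.smul_def]; exact TwoSidedIdeal.mul_mem_left _ _ _ ih

lemma smul_mem_OSIdeal {X : Set (Finset (Fin n))} (c : K) {x : Grass K n}
    (hx : x ∈ OSIdeal K n X) : c • x ∈ OSIdeal K n X := by
  rw [Algebra.smul_def]; exact TwoSidedIdeal.mul_mem_left _ _ _ hx

lemma involute_bd_monList (l : List (Fin n)) :
    CliffordAlgebra.involute (bd K n (monList K n l)) =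
      ((-1 : K) ^ (l.length - 1)) • bd K n (monList K n l) := by
  rw [bd_monList, map_sum, Finset.smul_sum]
  refine Finset.sum_congr rfl fun j hj => ?_
  rw [Finset.mem_range] at hj
  rw [map_smul, involute_monList]
  have hlen : (l.eraseIdx j).length = l.length - 1 := by
    have := List.length_eraseIdx_add_one (l := l) (i := j) hj
    omega
  rw [hlen, smul_smul, smul_smul, mul_comm]

lemma bd_mem_OSIdeal {X : Set (Finset (Fin n))} {x : Grass K n}
    (hx : x ∈ OSIdeal K n X) : bd K n x ∈ OSIdeal K n X := by
  rw [mem_OSIdeal_iff] at hx ⊢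
  induction hx using Submodule.span_induction with
  | mem w hw =>
    obtain ⟨x, y, Y, hY, rfl⟩ := hw
    have hinv : CliffordAlgebra.involute (bd K n (mon K n Y)) =
        ((-1 : K) ^ ((Y.sort (· ≤ ·)).length - 1)) • bd K n (mon K n Y) := by
      rw [← mon_def]; exact involute_bd_monList _
    rw [bd_mul, bd_mul, bd_bd, mul_zero, add_zero, map_mul, hinv]
    refine Submodule.add_mem _ ?_ ?_
    · exact Submodule.subset_span ⟨bd K n x, y, Y, hY, rfl⟩
    · rw [mul_smul_comm, smul_mul_assoc]
      refine Submodule.smul_mem _ _ (Submodule.subset_span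
        ⟨CliffordAlgebra.involute x, bd K n y, Y, hY, rfl⟩)
  | zero => rw [map_zero]; exact Submodule.zero_mem _
  | add x y _ _ ihx ihy => rw [map_add]; exact Submodule.add_mem _ ihx ihy
  | smul c x _ ih => rw [map_smul]; exact Submodule.smul_mem _ _ ih

lemma mon_eq_gen_mul_bd {Y : Finset (Fin n)} (hY : Y.Nonempty) :
    ∃ a, mon K n Y = gen K n a * bd K n (mon K n Y) := by
  have hsort : Y.sort (· ≤ ·) ≠ [] := by
    intro h
    apply hY.ne_empty
    apply Finset.card_eq_zero.1
    rw [← Finset.length_sort (· ≤ ·), h, List.length_nil]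
  obtain ⟨a, r, har⟩ := List.exists_cons_of_ne_nil hsort
  refine ⟨a, ?_⟩
  rw [← mon_def, har, monList_cons, bd_gen_mul, mul_sub, ← mul_assoc, gen_mul_self,
    zero_mul, sub_zero]

lemma mon_mem_OSIdeal {X : Set (Finset (Fin n))} {Y : Finset (Fin n)} (hY : Y ∈ X)
    (hne : Y.Nonempty) : mon K n Y ∈ OSIdeal K n X := by
  obtain ⟨a, ha⟩ := mon_eq_gen_mul_bd (K := K) (n := n) hne
  rw [ha]
  exact TwoSidedIdeal.mul_mem_left _ _ _ (TwoSidedIdeal.subset_span ⟨Y, hY, rfl⟩)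

lemma monList_superset_mem {X : Set (Finset (Fin n))} {Y : Finset (Fin n)} (hY : Y ∈ X)
    (hne : Y.Nonempty) {l : List (Fin n)} (hsub : Y ⊆ l.toFinset) :
    monList K n l ∈ OSIdeal K n X := by
  by_cases hnd : l.Nodup
  · have hperm : l.Perm ((l.toFinset \ Y).sort (· ≤ ·) ++ Y.sort (· ≤ ·)) := by
      apply List.perm_of_nodup_nodup_toFinset_eq hnd
      · refine List.Nodup.append (Finset.sort_nodup _ _) (Finset.sort_nodup _ _) ?_
        intro a ha ha'
        rw [Finset.mem_sort] at ha ha'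
        exact (Finset.mem_sdiff.1 ha).2 ha'
      · rw [List.toFinset_append, Finset.sort_toFinset, Finset.sort_toFinset,
          Finset.sdiff_union_of_subset hsub]
    obtain ⟨c, _, he⟩ := monList_perm (K := K) hperm
    rw [he, monList_append, mon_def]
    exact smul_mem_OSIdeal _ (TwoSidedIdeal.mul_mem_left _ _ _ (mon_mem_OSIdeal hY hne))
  · rw [monList_not_nodup hnd]; exact zero_mem _

lemma toFinset_eraseIdx (l : List (Fin n)) (j : ℕ) (hnd : l.Nodup) (h : j < l.length) :
    (l.eraseIdx j).toFinset = l.toFinset.erase (l[j]'h) := by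
  induction l generalizing j with
  | nil => simp at h
  | cons a l ih =>
    rw [List.nodup_cons] at hnd
    cases j with
    | zero =>
      simp only [List.eraseIdx_cons_zero, List.toFinset_cons, List.getElem_cons_zero]
      rw [Finset.erase_insert (by simpa using hnd.1)]
    | succ j =>
      simp only [List.eraseIdx_cons_succ, List.toFinset_cons, List.getElem_cons_succ]
      rw [ih j hnd.2 (by simpa using h), Finset.erase_insert_of_ne]
      exact fun he => hnd.1 (he ▸ List.getElem_mem _)

lemma bd_mon_mem_span (Y : Finset (Fin n)) :
    bd K n (mon K n Y) ∈ Submodule.span K ((fun t => mon K n (Y.erase t)) '' ↑Y) := by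
  rw [← mon_def, bd_monList]
  refine Submodule.sum_mem _ fun j hj => Submodule.smul_mem _ _ ?_
  rw [Finset.mem_range] at hj
  have hnd : (Y.sort (· ≤ ·)).Nodup := Finset.sort_nodup _ _
  obtain ⟨c, _, he⟩ := monList_nodup_eq (K := K)
    (l := (Y.sort (· ≤ ·)).eraseIdx j) (List.Nodup.sublist (List.eraseIdx_sublist _ _) hnd)
  rw [he, toFinset_eraseIdx _ _ hnd hj, Finset.sort_toFinset]
  refine Submodule.smul_mem _ _ (Submodule.subset_span ⟨(Y.sort (· ≤ ·))[j]'hj, ?_, rfl⟩)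
  have hmem : (Y.sort (· ≤ ·))[j]'hj ∈ Y.sort (· ≤ ·) := List.getElem_mem _
  rw [Finset.mem_sort] at hmem
  exact Finset.mem_coe.2 hmem

end spans

section V

/-- The monomial-support condition. -/
def PSet {n : ℕ} (X : Set (Finset (Fin n))) (T : Finset (Fin n)) : Prop :=
  ∃ Y ∈ X, ∃ t ∈ Y, Y.erase t ⊆ T

/-- Monomials supported on `PSet`-admissible sets. -/
def VSet (K : Type) [Field K] (n : ℕ) (X : Set (Finset (Fin n))) : Set (Grass K n) :=
  mon K n '' {T | PSet X T}

lemma monList_mem_VSpan {X : Set (Finset (Fin n))} {l : List (Fin n)}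
    {T : Finset (Fin n)} (hT : PSet X T) (hsub : T ⊆ l.toFinset) :
    monList K n l ∈ Submodule.span K (VSet K n X) := by
  by_cases hnd : l.Nodup
  · obtain ⟨c, _, he⟩ := monList_nodup_eq (K := K) hnd
    rw [he]
    refine Submodule.smul_mem _ _ (Submodule.subset_span ⟨l.toFinset, ?_, rfl⟩)
    obtain ⟨Y, hY, t, ht, hsub'⟩ := hT
    exact ⟨Y, hY, t, ht, hsub'.trans hsub⟩
  · rw [monList_not_nodup hnd]; exact Submodule.zero_mem _

lemma VSpan_mul_monList {X : Set (Finset (Fin n))} {T : Finset (Fin n)} (hT : PSet X T)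
    (l : List (Fin n)) : monList K n l * mon K n T ∈ Submodule.span K (VSet K n X) := by
  rw [← mon_def, ← monList_append]
  refine monList_mem_VSpan hT ?_
  intro a ha
  rw [List.toFinset_append, Finset.mem_union]
  right
  rw [Finset.sort_toFinset]
  exact ha

lemma monList_mul_VSpan {X : Set (Finset (Fin n))} {T : Finset (Fin n)} (hT : PSet X T)
    (l : List (Fin n)) : mon K n T * monList K n l ∈ Submodule.span K (VSet K n X) := by
  rw [← mon_def, ← monList_append]
  refine monList_mem_VSpan hT ?_
  intro a ha
  rw [List.toFinset_append, Finset.mem_union]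
  left
  rw [Finset.sort_toFinset]
  exact ha

lemma VSpan_mul_left (X : Set (Finset (Fin n))) (z : Grass K n) {v : Grass K n}
    (hv : v ∈ Submodule.span K (VSet K n X)) :
    z * v ∈ Submodule.span K (VSet K n X) := by
  induction hv using Submodule.span_induction with
  | mem w hw =>
    obtain ⟨T, hT, rfl⟩ := hw
    have hz := mem_span_monList (K := K) (n := n) z
    induction hz using Submodule.span_induction with
    | mem u hu => obtain ⟨l, rfl⟩ := hu; exact VSpan_mul_monList hT l
    | zero => rw [zero_mul]; exact Submodule.zero_mem _
    | add x y _ _ ihx ihy => rw [add_mul]; exact Submodule.add_mem _ ihx ihy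
    | smul c x _ ih => rw [smul_mul_assoc]; exact Submodule.smul_mem _ _ ih
  | zero => rw [mul_zero]; exact Submodule.zero_mem _
  | add x y _ _ ihx ihy => rw [mul_add]; exact Submodule.add_mem _ ihx ihy
  | smul c x _ ih => rw [mul_smul_comm]; exact Submodule.smul_mem _ _ ih

lemma VSpan_mul_right (X : Set (Finset (Fin n))) (z : Grass K n) {v : Grass K n}
    (hv : v ∈ Submodule.span K (VSet K n X)) :
    v * z ∈ Submodule.span K (VSet K n X) := by
  induction hv using Submodule.span_induction with
  | mem w hw =>
    obtain ⟨T, hT, rfl⟩ := hw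
    have hz := mem_span_monList (K := K) (n := n) z
    induction hz using Submodule.span_induction with
    | mem u hu => obtain ⟨l, rfl⟩ := hu; exact monList_mul_VSpan hT l
    | zero => rw [mul_zero]; exact Submodule.zero_mem _
    | add x y _ _ ihx ihy => rw [mul_add]; exact Submodule.add_mem _ ihx ihy
    | smul c x _ ih => rw [mul_smul_comm]; exact Submodule.smul_mem _ _ ih
  | zero => rw [zero_mul]; exact Submodule.zero_mem _
  | add x y _ _ ihx ihy => rw [add_mul]; exact Submodule.add_mem _ ihx ihy
  | smul c x _ ih => rw [smul_mul_assoc]; exact Submodule.smul_mem _ _ ih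

lemma OSIdeal_le_VSpan (X : Set (Finset (Fin n))) {v : Grass K n}
    (hv : v ∈ OSIdeal K n X) : v ∈ Submodule.span K (VSet K n X) := by
  have := TwoSidedIdeal.mem_span_iff.1 hv
    (TwoSidedIdeal.mk' (Submodule.span K (VSet K n X) : Set (Grass K n))
      (Submodule.zero_mem _) (fun hx hy => Submodule.add_mem _ hx hy)
      (fun hx => Submodule.neg_mem _ hx)
      (fun {x y} hy => VSpan_mul_left X x hy)
      (fun {x y} hx => VSpan_mul_right X y hx))
  rw [TwoSidedIdeal.mem_mk'] at this
  apply this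
  rw [TwoSidedIdeal.coe_mk']
  rintro w ⟨Y, hY, rfl⟩
  have hspan := bd_mon_mem_span (K := K) (n := n) Y
  refine Submodule.span_le.2 ?_ hspan
  rintro u ⟨t, ht, rfl⟩
  exact Submodule.subset_span ⟨Y.erase t, ⟨Y, hY, t, Finset.mem_coe.1 ht, subset_rfl⟩, rfl⟩

end V

section phi

/-- Contraction along the `c`-th coordinate functional. -/
noncomputable def contr (K : Type) [Field K] (n : ℕ) (c : Fin n) :
    Grass K n →ₗ[K] Grass K n :=
  CliffordAlgebra.contractLeft (LinearMap.proj c)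

/-- Iterated contraction. -/
noncomputable def contrs (K : Type) [Field K] (n : ℕ) : List (Fin n) → (Grass K n →ₗ[K] Grass K n)
  | [] => LinearMap.id
  | c :: m => (contrs K n m).comp (contr K n c)

lemma contr_gen_mul (c a : Fin n) (x : Grass K n) :
    contr K n c (gen K n a * x) =
      (if c = a then x else 0) - gen K n a * contr K n c x := by
  unfold contr gen
  rw [CliffordAlgebra.contractLeft_ι_mul]
  congr 1
  have : (LinearMap.proj c : (Fin n → K) →ₗ[K] K) (Pi.single a 1) =
      if c = a then (1 : K) else 0 := by
    simp [Pi.single_apply]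
  rw [this]
  split_ifs <;> simp

lemma contr_monList_zero {c : Fin n} {l : List (Fin n)} (h : c ∉ l) :
    contr K n c (monList K n l) = 0 := by
  induction l with
  | nil => exact CliffordAlgebra.contractLeft_one _ _
  | cons a l ih =>
    rw [List.mem_cons, not_or] at h
    rw [monList_cons, contr_gen_mul, if_neg h.1, ih h.2, mul_zero, zero_sub, neg_zero]

lemma contrs_monList_self {l : List (Fin n)} (h : l.Nodup) :
    contrs K n l (monList K n l) = 1 := by
  induction l with
  | nil => rfl
  | cons a l ih =>
    rw [List.nodup_cons] at h
    show contrs K n l (contr K n a (monList K n (a :: l))) = 1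
    rw [monList_cons, contr_gen_mul, if_pos rfl, contr_monList_zero h.1, mul_zero, sub_zero]
    exact ih h.2

/-- Monomials with entries in `F`. -/
def FSet (K : Type) [Field K] (n : ℕ) (F : Finset (Fin n)) : Set (Grass K n) :=
  {x | ∃ m : List (Fin n), (∀ a ∈ m, a ∈ F) ∧ x = monList K n m}

lemma gen_mul_FSpan {F : Finset (Fin n)} {a : Fin n} (ha : a ∈ F) {x : Grass K n}
    (hx : x ∈ Submodule.span K (FSet K n F)) :
    gen K n a * x ∈ Submodule.span K (FSet K n F) := by
  induction hx using Submodule.span_induction with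
  | mem w hw =>
    obtain ⟨m, hm, rfl⟩ := hw
    rw [← monList_cons]
    refine Submodule.subset_span ⟨a :: m, ?_, rfl⟩
    intro b hb
    rcases List.mem_cons.1 hb with rfl | hb
    · exact ha
    · exact hm b hb
  | zero => rw [mul_zero]; exact Submodule.zero_mem _
  | add x y _ _ ihx ihy => rw [mul_add]; exact Submodule.add_mem _ ihx ihy
  | smul c x _ ih => rw [mul_smul_comm]; exact Submodule.smul_mem _ _ ih

lemma contr_monList_FSpan {F : Finset (Fin n)} (d : Fin n) {m : List (Fin n)}
    (hm : ∀ a ∈ m, a ∈ F) :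
    contr K n d (monList K n m) ∈ Submodule.span K (FSet K n F) := by
  induction m with
  | nil =>
    have : contr K n d (monList K n []) = 0 := CliffordAlgebra.contractLeft_one _ _
    rw [this]; exact Submodule.zero_mem _
  | cons a m ih =>
    rw [monList_cons, contr_gen_mul, sub_eq_add_neg]
    refine Submodule.add_mem _ ?_ (Submodule.neg_mem _ ?_)
    · split_ifs
      · exact Submodule.subset_span ⟨m, fun b hb => hm b (List.mem_cons_of_mem _ hb), rfl⟩
      · exact Submodule.zero_mem _
    · exact gen_mul_FSpan (hm a List.mem_cons_self)
        (ih fun b hb => hm b (List.mem_cons_of_mem _ hb))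

lemma contr_FSpan {F : Finset (Fin n)} (d : Fin n) {x : Grass K n}
    (hx : x ∈ Submodule.span K (FSet K n F)) :
    contr K n d x ∈ Submodule.span K (FSet K n F) := by
  induction hx using Submodule.span_induction with
  | mem w hw => obtain ⟨m, hm, rfl⟩ := hw; exact contr_monList_FSpan d hm
  | zero => rw [map_zero]; exact Submodule.zero_mem _
  | add x y _ _ ihx ihy => rw [map_add]; exact Submodule.add_mem _ ihx ihy
  | smul c x _ ih => rw [map_smul]; exact Submodule.smul_mem _ _ ih

lemma contr_FSpan_zero {F : Finset (Fin n)} {c : Fin n} (hc : c ∉ F) {x : Grass K n}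
    (hx : x ∈ Submodule.span K (FSet K n F)) : contr K n c x = 0 := by
  induction hx using Submodule.span_induction with
  | mem w hw =>
    obtain ⟨m, hm, rfl⟩ := hw
    exact contr_monList_zero fun hcm => hc (hm c hcm)
  | zero => rw [map_zero]
  | add x y _ _ ihx ihy => rw [map_add, ihx, ihy, add_zero]
  | smul r x _ ih => rw [map_smul, ih, smul_zero]

lemma contrs_FSpan_zero {F : Finset (Fin n)} {c : Fin n} (hc : c ∉ F) :
    ∀ (m : List (Fin n)), c ∈ m → ∀ {x : Grass K n},
      x ∈ Submodule.span K (FSet K n F) → contrs K n m x = 0 := by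
  intro m
  induction m with
  | nil => intro h; exact absurd h List.not_mem_nil
  | cons d m ih =>
    intro hcm x hx
    show contrs K n m (contr K n d x) = 0
    by_cases hdc : d = c
    · subst hdc
      rw [contr_FSpan_zero hc hx, map_zero]
    · have hcm' : c ∈ m := by
        rcases List.mem_cons.1 hcm with h | h
        · exact absurd h.symm hdc
        · exact h
      exact ih hcm' (contr_FSpan d hx)

/-- Monomials of a given length. -/
def LSet (K : Type) [Field K] (n : ℕ) (d : ℕ) : Set (Grass K n) :=
  {x | ∃ m : List (Fin n), m.length = d ∧ x = monList K n m}

lemma gen_mul_LSpan {d : ℕ} {a : Fin n} {x : Grass K n}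
    (hx : x ∈ Submodule.span K (LSet K n d)) :
    gen K n a * x ∈ Submodule.span K (LSet K n (d + 1)) := by
  induction hx using Submodule.span_induction with
  | mem w hw =>
    obtain ⟨m, hm, rfl⟩ := hw
    rw [← monList_cons]
    exact Submodule.subset_span ⟨a :: m, by simp [hm], rfl⟩
  | zero => rw [mul_zero]; exact Submodule.zero_mem _
  | add x y _ _ ihx ihy => rw [mul_add]; exact Submodule.add_mem _ ihx ihy
  | smul c x _ ih => rw [mul_smul_comm]; exact Submodule.smul_mem _ _ ih

lemma contr_monList_LSpan (d : Fin n) (m : List (Fin n)) :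
    contr K n d (monList K n m) ∈ Submodule.span K (LSet K n (m.length - 1)) := by
  induction m with
  | nil =>
    have : contr K n d (monList K n []) = 0 := CliffordAlgebra.contractLeft_one _ _
    rw [this]; exact Submodule.zero_mem _
  | cons a m ih =>
    rw [monList_cons, contr_gen_mul, sub_eq_add_neg]
    refine Submodule.add_mem _ ?_ (Submodule.neg_mem _ ?_)
    · have : (a :: m).length - 1 = m.length := by simp
      rw [this]
      split_ifs
      · exact Submodule.subset_span ⟨m, rfl, rfl⟩
      · exact Submodule.zero_mem _
    · cases m with
      | nil =>
        have h0 : contr K n d (monList K n ([] : List (Fin n))) = 0 :=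
          CliffordAlgebra.contractLeft_one _ _
        rw [h0, mul_zero]
        exact Submodule.zero_mem _
      | cons b m' =>
        have hlen : (b :: m').length - 1 + 1 = (a :: b :: m').length - 1 := by simp
        rw [← hlen]
        exact gen_mul_LSpan ih

lemma contr_LSpan (d : Fin n) {e : ℕ} {x : Grass K n}
    (hx : x ∈ Submodule.span K (LSet K n (e + 1))) :
    contr K n d x ∈ Submodule.span K (LSet K n e) := by
  induction hx using Submodule.span_induction with
  | mem w hw =>
    obtain ⟨m, hm, rfl⟩ := hw
    have := contr_monList_LSpan (K := K) d m
    rwa [hm, Nat.add_sub_cancel] at this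
  | zero => rw [map_zero]; exact Submodule.zero_mem _
  | add x y _ _ ihx ihy => rw [map_add]; exact Submodule.add_mem _ ihx ihy
  | smul c x _ ih => rw [map_smul]; exact Submodule.smul_mem _ _ ih

lemma eps_gen (a : Fin n) : ExteriorAlgebra.algebraMapInv (gen K n a) = 0 := by
  unfold gen
  rw [ExteriorAlgebra.algebraMapInv]
  rw [ExteriorAlgebra.lift_ι_apply]
  rfl

lemma eps_LSpan {e : ℕ} {x : Grass K n} (hx : x ∈ Submodule.span K (LSet K n (e + 1))) :
    ExteriorAlgebra.algebraMapInv x = 0 := by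
  induction hx using Submodule.span_induction with
  | mem w hw =>
    obtain ⟨m, hm, rfl⟩ := hw
    cases m with
    | nil => simp at hm
    | cons a m' =>
      rw [monList_cons, map_mul, eps_gen, zero_mul]
  | zero => rw [map_zero]
  | add x y _ _ ihx ihy => rw [map_add, ihx, ihy, add_zero]
  | smul c x _ ih => rw [map_smul, ih, smul_zero]

lemma contrs_eps_zero : ∀ (m : List (Fin n)) {e : ℕ} {x : Grass K n},
    x ∈ Submodule.span K (LSet K n e) → m.length < e →
      ExteriorAlgebra.algebraMapInv (contrs K n m x) = 0 := by
  intro m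
  induction m with
  | nil =>
    intro e x hx hlt
    show ExteriorAlgebra.algebraMapInv x = 0
    obtain ⟨e', rfl⟩ : ∃ e', e = e' + 1 := ⟨e - 1, by omega⟩
    exact eps_LSpan hx
  | cons c m ih =>
    intro e x hx hlt
    show ExteriorAlgebra.algebraMapInv (contrs K n m (contr K n c x)) = 0
    obtain ⟨e', rfl⟩ : ∃ e', e = e' + 1 := ⟨e - 1, by omega⟩
    refine ih (contr_LSpan c hx) ?_
    simpa using Nat.lt_of_succ_lt_succ hlt

lemma phi_mon_self (C : Finset (Fin n)) :
    ExteriorAlgebra.algebraMapInv (contrs K n (C.sort (· ≤ ·)) (mon K n C)) = 1 := by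
  rw [← mon_def, contrs_monList_self (Finset.sort_nodup _ _), map_one]

lemma phi_mon_ne (C T : Finset (Fin n)) (hne : T ≠ C) :
    ExteriorAlgebra.algebraMapInv (contrs K n (C.sort (· ≤ ·)) (mon K n T)) = 0 := by
  by_cases hsub : C ⊆ T
  · -- C ⊊ T, use length argument
    have hcard : C.card < T.card := Finset.card_lt_card (lt_of_le_of_ne hsub (Ne.symm hne))
    have hx : mon K n T ∈ Submodule.span K (LSet K n T.card) := by
      rw [← mon_def]
      exact Submodule.subset_span ⟨T.sort (· ≤ ·), Finset.length_sort _, rfl⟩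
    refine contrs_eps_zero _ hx ?_
    rwa [Finset.length_sort]
  · -- some c ∈ C, c ∉ T
    obtain ⟨c, hcC, hcT⟩ := Finset.not_subset.1 hsub
    have hx : mon K n T ∈ Submodule.span K (FSet K n T) := by
      rw [← mon_def]
      exact Submodule.subset_span ⟨T.sort (· ≤ ·), fun a ha => (Finset.mem_sort _).1 ha, rfl⟩
    have hcm : c ∈ C.sort (· ≤ ·) := (Finset.mem_sort _).2 hcC
    rw [contrs_FSpan_zero hcT _ hcm hx, map_zero]

lemma mon_not_mem_VSpan {X : Set (Finset (Fin n))} {C : Finset (Fin n)}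
    (hP : ¬ PSet X C) : mon K n C ∉ Submodule.span K (VSet K n X) := by
  intro hmem
  set Φ : Grass K n →ₗ[K] K :=
    (ExteriorAlgebra.algebraMapInv (R := K) (M := Fin n → K)).toLinearMap.comp
      (contrs K n (C.sort (· ≤ ·))) with hΦ
  have hker : Submodule.span K (VSet K n X) ≤ LinearMap.ker Φ := by
    rw [Submodule.span_le]
    rintro w ⟨T, hT, rfl⟩
    have hTC : T ≠ C := fun h => hP (h ▸ hT)
    simp only [SetLike.mem_coe, LinearMap.mem_ker, hΦ, LinearMap.coe_comp,
      Function.comp_apply, AlgHom.toLinearMap_apply]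
    exact phi_mon_ne C T hTC
  have h1 : Φ (mon K n C) = 1 := by
    simp only [hΦ, LinearMap.coe_comp, Function.comp_apply, AlgHom.toLinearMap_apply]
    exact phi_mon_self C
  have h0 : Φ (mon K n C) = 0 := hker hmem
  rw [h1] at h0
  exact one_ne_zero h0

end phi

section comb

lemma circuit_nonempty {M : Matroid (Fin n)} {C : Finset (Fin n)} (hC : IsCircuit M C) :
    C.Nonempty := by
  have := hC.1.nonempty
  rwa [Finset.coe_nonempty] at this

lemma circuit_eq_of_subset {M : Matroid (Fin n)} {C D : Finset (Fin n)}
    (hC : IsCircuit M C) (hD : IsCircuit M D) (h : D ⊆ C) : D = C := by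
  by_contra hne
  exact hC.2 D (ssubset_iff_subset_ne.2 ⟨h, hne⟩) hD.1

lemma comb {M : Matroid (Fin n)} (hs : SimpleM M) (hb : BinaryM M)
    {C : Finset (Fin n)} (hC : IsCircuit M C) (hk : 4 ≤ C.card)
    {Y : Finset (Fin n)} (hY : IsCircuit M Y) (hYcard : Y.card ≤ C.card - 1)
    {t : Fin n} (ht : t ∈ Y) (hsub : Y.erase t ⊆ C) : HasChord M C := by
  have htA : t ∉ Y.erase t := Finset.notMem_erase t Y
  have hAY : Y.erase t ⊆ Y := Finset.erase_subset t Y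
  have hAne : (Y.erase t).Nonempty := by
    have h3 := hs Y hY
    have : 1 ≤ (Y.erase t).card := by rw [Finset.card_erase_of_mem ht]; omega
    exact Finset.card_pos.1 this
  have htC : t ∉ C := by
    intro htC
    have hYC : Y ⊆ C := by
      intro a haY
      by_cases hat : a = t
      · exact hat ▸ htC
      · exact hsub (Finset.mem_erase.2 ⟨hat, haY⟩)
    refine hC.2 Y (ssubset_iff_subset_ne.2 ⟨hYC, ?_⟩) hY.1
    intro h
    rw [h] at hYcard
    omega
  have hYneC : Y ≠ C := fun h => htC (h ▸ ht)
  obtain ⟨C₂, hC₂, hC₂sub⟩ := hb Y C hY hC hYneC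
  have hsd : symmDiff Y C = insert t (C \ Y.erase t) := by
    ext a
    have h1 : a ∈ Y → a ≠ t → a ∈ C := fun h1 h2 => hsub (Finset.mem_erase.2 ⟨h2, h1⟩)
    by_cases hat : a = t
    · subst hat
      simp only [Finset.mem_symmDiff, Finset.mem_insert, Finset.mem_sdiff, Finset.mem_erase]
      tauto
    · simp only [Finset.mem_symmDiff, Finset.mem_insert, Finset.mem_sdiff, Finset.mem_erase]
      tauto
  have htC₂ : t ∈ C₂ := by
    by_contra htC₂
    have hsubC : C₂ ⊆ C \ Y.erase t := by
      intro a ha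
      have h := hC₂sub ha
      rw [hsd] at h
      rcases Finset.mem_insert.1 h with rfl | h
      · exact absurd ha htC₂
      · exact h
    have hCA : C \ Y.erase t ⊂ C := Finset.sdiff_ssubset hsub hAne
    exact hC.2 C₂ (lt_of_le_of_lt hsubC hCA) hC₂.1
  have hBCA : C₂.erase t ⊆ C \ Y.erase t := by
    intro a ha
    rw [Finset.mem_erase] at ha
    have h := hC₂sub ha.2
    rw [hsd] at h
    rcases Finset.mem_insert.1 h with h | h
    · exact absurd h ha.1
    · exact h
  have hYC₂ : Y ≠ C₂ := by
    intro h
    obtain ⟨a, haA⟩ := hAne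
    have haB : a ∈ C₂.erase t := h ▸ haA
    have := hBCA haB
    exact (Finset.mem_sdiff.1 this).2 haA
  obtain ⟨D, hD, hDsub⟩ := hb Y C₂ hY hC₂ hYC₂
  have hdisj : ∀ a, a ∈ Y.erase t → a ∈ C₂.erase t → False := by
    intro a h1 h2
    exact (Finset.mem_sdiff.1 (hBCA h2)).2 h1
  have hsd2 : symmDiff Y C₂ = Y.erase t ∪ C₂.erase t := by
    ext a
    have h0 := hdisj a
    have h1 : a ∈ Y.erase t ↔ (a ≠ t ∧ a ∈ Y) := Finset.mem_erase
    have h2 : a ∈ C₂.erase t ↔ (a ≠ t ∧ a ∈ C₂) := Finset.mem_erase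
    by_cases hat : a = t
    · subst hat
      simp only [Finset.mem_symmDiff, Finset.mem_union]
      tauto
    · simp only [Finset.mem_symmDiff, Finset.mem_union]
      tauto
  have hDC : D ⊆ C := by
    refine hDsub.trans ?_
    rw [hsd2]
    exact Finset.union_subset hsub (hBCA.trans (Finset.sdiff_subset))
  have hDeq : D = C := circuit_eq_of_subset hC hD hDC
  have hCsub : C ⊆ symmDiff Y C₂ := hDeq ▸ hDsub
  have hCeq : C = symmDiff Y C₂ := by
    apply Finset.Subset.antisymm hCsub
    rw [hsd2]
    exact Finset.union_subset hsub (hBCA.trans (Finset.sdiff_subset))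
  have hint : Y ∩ C₂ = {t} := by
    ext a
    rw [Finset.mem_inter, Finset.mem_singleton]
    constructor
    · rintro ⟨h1, h2⟩
      by_contra hat
      exact hdisj a (Finset.mem_erase.2 ⟨hat, h1⟩) (Finset.mem_erase.2 ⟨hat, h2⟩)
    · rintro rfl
      exact ⟨ht, htC₂⟩
  exact ⟨t, Y, C₂, hY, hC₂, hint, hCeq⟩

end comb

section main

lemma chord_mon_mem {M : Matroid (Fin n)} (hs : SimpleM M)
    {C : Finset (Fin n)} (hC : IsCircuit M C) (hk : 4 ≤ C.card)
    (hch : HasChord M C) :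
    mon K n C ∈ OSIdeal K n (CircuitsLe M (C.card - 1)) := by
  obtain ⟨i, C₁, C₂, h1, h2, hint, hCeq⟩ := hch
  have hiC₁ : i ∈ C₁ := by
    have : i ∈ C₁ ∩ C₂ := by rw [hint]; exact Finset.mem_singleton_self i
    exact (Finset.mem_inter.1 this).1
  have hiC₂ : i ∈ C₂ := by
    have : i ∈ C₁ ∩ C₂ := by rw [hint]; exact Finset.mem_singleton_self i
    exact (Finset.mem_inter.1 this).2
  have honly : ∀ a, a ∈ C₁ → a ∈ C₂ → a = i := by
    intro a hA hB
    have : a ∈ C₁ ∩ C₂ := Finset.mem_inter.2 ⟨hA, hB⟩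
    rw [hint] at this
    exact Finset.mem_singleton.1 this
  have hcard : C.card + 2 = C₁.card + C₂.card := by
    have h5 := Finset.card_union_add_card_inter C₁ C₂
    have h6 : (C₁ ∩ C₂).card = 1 := by rw [hint]; exact Finset.card_singleton i
    have h7 : C.card = (C₁ ∪ C₂).card - 1 := by
      rw [hCeq, symmDiff_eq_sup_sdiff_inf, Finset.sup_eq_union, Finset.inf_eq_inter,
        Finset.card_sdiff_of_subset Finset.inter_subset_union, h6]
    have h8 : 1 ≤ (C₁ ∪ C₂).card := Finset.card_pos.2 ⟨i, Finset.mem_union_left _ hiC₁⟩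
    omega
  have h31 := hs C₁ h1
  have h32 := hs C₂ h2
  have hX1 : C₁ ∈ CircuitsLe M (C.card - 1) := ⟨h1, by omega⟩
  have hX2 : C₂ ∈ CircuitsLe M (C.card - 1) := ⟨h2, by omega⟩
  have hCunion : C = (C₁.erase i) ∪ (C₂.erase i) := by
    ext a
    have hmA : a ∈ C₁.erase i ↔ (a ≠ i ∧ a ∈ C₁) := Finset.mem_erase
    have hmB : a ∈ C₂.erase i ↔ (a ≠ i ∧ a ∈ C₂) := Finset.mem_erase
    have h0 := honly a
    rw [hCeq]
    by_cases hai : a = i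
    · subst hai
      simp only [Finset.mem_symmDiff, Finset.mem_union]
      tauto
    · simp only [Finset.mem_symmDiff, Finset.mem_union]
      tauto
  set l₁ := C₁.sort (· ≤ ·) with hl₁
  set l₂' := (C₂.erase i).sort (· ≤ ·) with hl₂
  have hnd₁ : l₁.Nodup := Finset.sort_nodup _ _
  obtain ⟨p, hp, hpi⟩ := List.mem_iff_getElem.1 ((Finset.mem_sort (· ≤ ·)).2 hiC₁)
  set f : ℕ → Grass K n := fun j => ((-1:K)^j) • monList K n (l₁.eraseIdx j ++ l₂') with hf
  have hu : bd K n (mon K n C₁) * monList K n l₂' = ∑ j ∈ Finset.range l₁.length, f j := by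
    rw [← mon_def, bd_monList, Finset.sum_mul]
    refine Finset.sum_congr rfl fun j _ => ?_
    simp only [hf]
    rw [smul_mul_assoc, ← monList_append]
  have husum : (∑ j ∈ Finset.range l₁.length, f j) ∈
      OSIdeal K n (CircuitsLe M (C.card - 1)) := by
    rw [← hu]
    exact TwoSidedIdeal.mul_mem_right _ _ _ (TwoSidedIdeal.subset_span ⟨C₁, hX1, rfl⟩)
  have hC₂ne : C₂.Nonempty := ⟨i, hiC₂⟩
  have hothers : ∀ j ∈ (Finset.range l₁.length).erase p,
      f j ∈ OSIdeal K n (CircuitsLe M (C.card - 1)) := by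
    intro j hj
    rw [Finset.mem_erase, Finset.mem_range] at hj
    refine smul_mem_OSIdeal _ (monList_superset_mem hX2 hC₂ne ?_)
    intro a ha
    rw [List.toFinset_append, Finset.mem_union, toFinset_eraseIdx _ _ hnd₁ hj.2]
    by_cases hai : a = i
    · left
      subst hai
      have hts : l₁.toFinset = C₁ := by rw [hl₁]; exact Finset.sort_toFinset _ _
      rw [hts]
      refine Finset.mem_erase.2 ⟨?_, hiC₁⟩
      intro h
      have hjp : p = j := hnd₁.getElem_inj_iff.1 (hpi.trans h)
      exact hj.1 hjp.symm
    · right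
      rw [hl₂, Finset.sort_toFinset]
      exact Finset.mem_erase.2 ⟨hai, ha⟩
  have hpmem : p ∈ Finset.range l₁.length := Finset.mem_range.2 hp
  have hfp : f p ∈ OSIdeal K n (CircuitsLe M (C.card - 1)) := by
    have hsplit := Finset.add_sum_erase (Finset.range l₁.length) f hpmem
    have heq : f p = (∑ j ∈ Finset.range l₁.length, f j)
        - ∑ j ∈ (Finset.range l₁.length).erase p, f j := by
      rw [← hsplit]; abel
    rw [heq]
    exact sub_mem husum (sum_mem hothers)
  have hndfp : (l₁.eraseIdx p ++ l₂').Nodup := by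
    refine List.Nodup.append (List.Nodup.sublist (List.eraseIdx_sublist _ _) hnd₁)
      (Finset.sort_nodup _ _) ?_
    intro a ha ha'
    have h1' : a ∈ C₁.erase i := by
      have hmem := List.mem_toFinset.2 ha
      rwa [toFinset_eraseIdx _ _ hnd₁ hp, hpi, hl₁, Finset.sort_toFinset] at hmem
    have h2' : a ∈ C₂.erase i := by rwa [hl₂, Finset.mem_sort] at ha'
    exact (Finset.mem_erase.1 h1').1
      (honly a (Finset.mem_erase.1 h1').2 (Finset.mem_erase.1 h2').2)
  have htf : (l₁.eraseIdx p ++ l₂').toFinset = C := by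
    rw [List.toFinset_append, toFinset_eraseIdx _ _ hnd₁ hp, hpi, hl₁, hl₂,
      Finset.sort_toFinset, Finset.sort_toFinset, ← hCunion]
  obtain ⟨c, hcpm, hcval⟩ := monList_nodup_eq (K := K) hndfp
  have hfpval : f p = ((-1:K)^p * c) • mon K n C := by
    rw [hf]
    show ((-1:K)^p) • monList K n (l₁.eraseIdx p ++ l₂') = _
    rw [hcval, htf, smul_smul]
  have hcne : ((-1:K)^p * c) ≠ 0 := by
    rcases hcpm with rfl | rfl <;>
      simp [pow_ne_zero, (by norm_num : (-1:K) ≠ 0)]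
  have hfinal := smul_mem_OSIdeal (((-1:K)^p * c)⁻¹) hfp
  rw [hfpval, smul_smul, inv_mul_cancel₀ hcne, one_smul] at hfinal
  exact hfinal

end main

end Stmt10Aux

open Stmt10Aux

/-- for a circuit `C` of a binary matroid with `|C| = k ≥ 4`, the following
are equivalent: `C` has a chord; `∂ e_C ∈ ℑ(𝔠_{k-1})`; `e_C ∈ ℑ(𝔠_{k-1})`. -/
theorem stmt10 (K : Type) [Field K] (n : ℕ) (M : Matroid (Fin n)) (hE : M.E = Set.univ)
    (hs : SimpleM M) (hb : BinaryM M) (C : Finset (Fin n)) (hC : IsCircuit M C)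
    (hk : 4 ≤ C.card) :
    (HasChord M C ↔ bd K n (mon K n C) ∈ OSIdeal K n (CircuitsLe M (C.card - 1))) ∧
    (HasChord M C ↔ mon K n C ∈ OSIdeal K n (CircuitsLe M (C.card - 1))) := by
  have hCne : C.Nonempty := Finset.card_pos.1 (by omega)
  have easy : HasChord M C → mon K n C ∈ OSIdeal K n (CircuitsLe M (C.card - 1)) :=
    chord_mon_mem hs hC hk
  have e2 : HasChord M C → bd K n (mon K n C) ∈ OSIdeal K n (CircuitsLe M (C.card - 1)) :=
    fun h => bd_mem_OSIdeal (easy h)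
  have hard : mon K n C ∈ OSIdeal K n (CircuitsLe M (C.card - 1)) → HasChord M C := by
    intro hmem
    by_contra hch
    have hP : ¬ PSet (CircuitsLe M (C.card - 1)) C := by
      rintro ⟨Y, hYX, t, ht, hsub⟩
      exact hch (comb hs hb hC hk hYX.1 hYX.2 ht hsub)
    exact mon_not_mem_VSpan hP (OSIdeal_le_VSpan _ hmem)
  have hard2 : bd K n (mon K n C) ∈ OSIdeal K n (CircuitsLe M (C.card - 1)) → HasChord M C := by
    intro hmem
    obtain ⟨a, ha⟩ := mon_eq_gen_mul_bd (K := K) (n := n) hCne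
    exact hard (ha ▸ TwoSidedIdeal.mul_mem_left _ _ _ hmem)
  exact ⟨⟨e2, hard2⟩, ⟨easy, hard⟩⟩
end
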